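/- Let C ⊆ F_2^n be a binary linear code with minimum distance at least 2t+1, and let u > t and r be natural numbers. Then the number of vectors y in F_2^n with wt(y) = u that lie within Hamming distance t of some codeword of weight r equals A_r · Σ_{(a,b)} C(r,a)·C(n−r,b), where the sum is over all pairs of natural numbers (a,b) with a + b ≤ t and u + a = r + b. -/

import Mathlib

open Finset

private lemma zmod2_ne_iff : ∀ a b : ZMod 2, (a ≠ b) ↔ ((b ≠ 0 ∧ ¬ a ≠ 0) ∨ (a ≠ 0 ∧ ¬ b ≠ 0)) := by
  decide

private lemma zmod2_eq_of_supp : ∀ a b : ZMod 2, (a ≠ 0 ↔ b ≠ 0) → a = b := by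
  decide

private lemma ball_count (n t u r : ℕ) (c : Fin n → ZMod 2) (hc : hammingNorm c = r) :
    (Finset.univ.filter (fun y : Fin n → ZMod 2 =>
        hammingNorm y = u ∧ hammingDist y c ≤ t)).card =
      ∑ ab ∈ (Finset.range (t + 1) ×ˢ Finset.range (t + 1)).filter
          (fun ab => ab.1 + ab.2 ≤ t ∧ u + ab.1 = r + ab.2),
        r.choose ab.1 * (n - r).choose ab.2 := by
  classical
  set S : Finset (Fin n) := Finset.univ.filter (fun i => c i ≠ 0) with hS
  have hScard : S.card = r := hc
  have hSccard : Sᶜ.card = n - r := by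
    rw [Finset.card_compl, hScard, Fintype.card_fin]
  set pairs := (Finset.range (t + 1) ×ˢ Finset.range (t + 1)).filter
      (fun ab => ab.1 + ab.2 ≤ t ∧ u + ab.1 = r + ab.2) with hpairs
  -- distance formula
  have hdist : ∀ y : Fin n → ZMod 2,
      hammingDist y c = (S \ (Finset.univ.filter fun i => y i ≠ 0)).card
        + ((Finset.univ.filter fun i => y i ≠ 0) \ S).card := by
    intro y
    set T : Finset (Fin n) := Finset.univ.filter fun i => y i ≠ 0
    have hunion : (Finset.univ.filter fun i => y i ≠ c i) = (S \ T) ∪ (T \ S) := by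
      ext i
      simp only [Finset.mem_filter, Finset.mem_union, Finset.mem_sdiff, Finset.mem_univ,
        true_and, hS, T]
      constructor
      · intro h; rcases (zmod2_ne_iff (y i) (c i)).1 h with h' | h'
        · exact Or.inl ⟨h'.1, h'.2⟩
        · exact Or.inr ⟨h'.1, h'.2⟩
      · intro h; apply (zmod2_ne_iff (y i) (c i)).2; tauto
    have hdisj : Disjoint (S \ T) (T \ S) := by
      simp [Finset.disjoint_left, Finset.mem_sdiff]; tauto
    show (Finset.univ.filter fun i => y i ≠ c i).card = _
    rw [hunion, Finset.card_union_of_disjoint hdisj]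
  -- RHS as card of a biUnion
  have hRHS : ∑ ab ∈ pairs, r.choose ab.1 * (n - r).choose ab.2 =
      (pairs.biUnion fun ab => S.powersetCard ab.1 ×ˢ Sᶜ.powersetCard ab.2).card := by
    rw [Finset.card_biUnion]
    · refine Finset.sum_congr rfl fun ab _ => ?_
      rw [Finset.card_product, Finset.card_powersetCard, Finset.card_powersetCard,
        hScard, hSccard]
    · intro a ha b hb hab
      simp only [Finset.disjoint_left]
      rintro ⟨A, B⟩ hA hB
      simp only [Finset.mem_product, Finset.mem_powersetCard] at hA hB
      exact hab (Prod.ext (hA.1.2 ▸ hB.1.2.symm ▸ rfl) (hA.2.2 ▸ hB.2.2.symm ▸ rfl))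
  rw [hRHS]
  apply Finset.card_bij (fun y _ =>
    (S \ (Finset.univ.filter fun i => y i ≠ 0), (Finset.univ.filter fun i => y i ≠ 0) \ S))
  · -- maps into
    intro y hy
    simp only [Finset.mem_filter, Finset.mem_univ, true_and] at hy
    obtain ⟨hwt, hd⟩ := hy
    set T : Finset (Fin n) := Finset.univ.filter fun i => y i ≠ 0 with hT
    have hdy := hdist y
    rw [← hT] at hdy
    have ha : (S \ T).card ≤ r := le_trans (Finset.card_le_card (Finset.sdiff_subset)) hScard.le
    have hTcard : T.card = u := hwt
    have hsplit : T.card = (T ∩ S).card + (T \ S).card := by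
      rw [Finset.card_inter_add_card_sdiff]
    have hsplit2 : S.card = (S \ T).card + (S ∩ T).card := by
      rw [add_comm, Finset.card_inter_add_card_sdiff]
    rw [Finset.inter_comm] at hsplit
    simp only [Finset.mem_biUnion]
    refine ⟨((S \ T).card, (T \ S).card), ?_, ?_⟩
    · simp only [hpairs, Finset.mem_filter, Finset.mem_product, Finset.mem_range]
      omega
    · exact Finset.mem_product.2 ⟨Finset.mem_powersetCard.2 ⟨Finset.sdiff_subset, rfl⟩,
        Finset.mem_powersetCard.2
          ⟨fun i hi => Finset.mem_compl.2 (Finset.mem_sdiff.1 hi).2, rfl⟩⟩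
  · -- injective
    intro y1 h1 y2 h2 heq
    have h1' := congrArg Prod.fst heq
    have h2' := congrArg Prod.snd heq
    simp only at h1' h2'
    set T1 : Finset (Fin n) := Finset.univ.filter fun i => y1 i ≠ 0
    set T2 : Finset (Fin n) := Finset.univ.filter fun i => y2 i ≠ 0
    have hT : T1 = T2 := by
      have e1 : S \ (S \ T1) = S ∩ T1 := Finset.sdiff_sdiff_self_left S T1
      have e2 : S \ (S \ T2) = S ∩ T2 := Finset.sdiff_sdiff_self_left S T2
      have : S ∩ T1 = S ∩ T2 := by rw [← e1, ← e2, h1']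
      have hfull : T1 = (S ∩ T1) ∪ (T1 \ S) := by
        ext i; simp only [Finset.mem_union, Finset.mem_inter, Finset.mem_sdiff]; tauto
      have hfull2 : T2 = (S ∩ T2) ∪ (T2 \ S) := by
        ext i; simp only [Finset.mem_union, Finset.mem_inter, Finset.mem_sdiff]; tauto
      rw [hfull, hfull2, this, h2']
    funext i
    apply zmod2_eq_of_supp
    have := Finset.ext_iff.1 hT i
    simp only [T1, T2, Finset.mem_filter, Finset.mem_univ, true_and] at this
    exact this
  · -- surjective
    rintro ⟨A, B⟩ hAB
    simp only [Finset.mem_biUnion, Finset.mem_product, Finset.mem_powersetCard] at hAB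
    obtain ⟨⟨a, b⟩, habm, ⟨hAS, hAcard⟩, ⟨hBS, hBcard⟩⟩ := hAB
    simp only [hpairs, Finset.mem_filter, Finset.mem_product, Finset.mem_range] at habm
    have hAcard : A.card = a := hAcard
    have hBcard : B.card = b := hBcard
    have hBS' : ∀ i ∈ B, i ∉ S := fun i hi => Finset.mem_compl.1 (hBS hi)
    refine ⟨fun i => if i ∈ (S \ A) ∪ B then 1 else 0, ?_, ?_⟩
    · -- membership in LHS filter
      set y : Fin n → ZMod 2 := fun i => if i ∈ (S \ A) ∪ B then 1 else 0 with hy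
      have hTy : (Finset.univ.filter fun i => y i ≠ 0) = (S \ A) ∪ B := by
        ext i
        simp only [Finset.mem_filter, Finset.mem_univ, true_and, hy]
        by_cases h : i ∈ (S \ A) ∪ B <;> simp [h]
      have hdisj : Disjoint (S \ A) B := by
        simp only [Finset.disjoint_left, Finset.mem_sdiff]
        intro i hi; exact fun hb => hBS' i hb hi.1
      have hcardT : ((S \ A) ∪ B).card = (r - a) + b := by
        rw [Finset.card_union_of_disjoint hdisj, Finset.card_sdiff_of_subset hAS, hScard, hAcard, hBcard]
      have hST : S \ ((S \ A) ∪ B) = A := by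
        ext i
        simp only [Finset.mem_sdiff, Finset.mem_union]
        constructor
        · intro ⟨hiS, hni⟩; by_contra hA; exact hni (Or.inl ⟨hiS, hA⟩)
        · intro hA; exact ⟨hAS hA, fun h => by
            rcases h with h | h
            · exact h.2 hA
            · exact hBS' i h (hAS hA)⟩
      have hTS : ((S \ A) ∪ B) \ S = B := by
        ext i
        simp only [Finset.mem_sdiff, Finset.mem_union]
        constructor
        · rintro ⟨h | h, hns⟩
          · exact absurd h.1 hns
          · exact h
        · intro hB; exact ⟨Or.inr hB, hBS' i hB⟩
      have haR : a ≤ r := by rw [← hScard, ← hAcard]; exact Finset.card_le_card hAS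
      simp only [Finset.mem_filter, Finset.mem_univ, true_and]
      constructor
      · show (Finset.univ.filter fun i => y i ≠ 0).card = u
        rw [hTy, hcardT]; omega
      · rw [hdist y, hTy, hST, hTS, hAcard, hBcard]; omega
    · -- image is (A, B)
      set y : Fin n → ZMod 2 := fun i => if i ∈ (S \ A) ∪ B then 1 else 0 with hy
      have hTy : (Finset.univ.filter fun i => y i ≠ 0) = (S \ A) ∪ B := by
        ext i
        simp only [Finset.mem_filter, Finset.mem_univ, true_and, hy]
        by_cases h : i ∈ (S \ A) ∪ B <;> simp [h]
      have hST : S \ ((S \ A) ∪ B) = A := by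
        ext i
        simp only [Finset.mem_sdiff, Finset.mem_union]
        constructor
        · intro ⟨hiS, hni⟩; by_contra hA; exact hni (Or.inl ⟨hiS, hA⟩)
        · intro hA; exact ⟨hAS hA, fun h => by
            rcases h with h | h
            · exact h.2 hA
            · exact hBS' i h (hAS hA)⟩
      have hTS : ((S \ A) ∪ B) \ S = B := by
        ext i
        simp only [Finset.mem_sdiff, Finset.mem_union]
        constructor
        · rintro ⟨h | h, hns⟩
          · exact absurd h.1 hns
          · exact h
        · intro hB; exact ⟨Or.inr hB, hBS' i hB⟩
      simp only [hTy, hST, hTS]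

theorem bdd_miscorrection_count (n t u r : ℕ)
    (C : Submodule (ZMod 2) (Fin n → ZMod 2)) [DecidablePred (· ∈ C)]
    (hdmin : ∀ c ∈ C, c ≠ 0 → 2 * t + 1 ≤ hammingNorm c)
    (hu : t < u) :
    (Finset.univ.filter (fun y : Fin n → ZMod 2 =>
        hammingNorm y = u ∧
          ∃ c ∈ C, hammingNorm c = r ∧ hammingDist y c ≤ t)).card =
      (Finset.univ.filter
          (fun c : Fin n → ZMod 2 => c ∈ C ∧ hammingNorm c = r)).card *
        ∑ ab ∈ (Finset.range (t + 1) ×ˢ Finset.range (t + 1)).filter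
            (fun ab => ab.1 + ab.2 ≤ t ∧ u + ab.1 = r + ab.2),
          r.choose ab.1 * (n - r).choose ab.2 := by
  classical
  set W := Finset.univ.filter (fun c : Fin n → ZMod 2 => c ∈ C ∧ hammingNorm c = r) with hW
  have hLHS : (Finset.univ.filter (fun y : Fin n → ZMod 2 =>
        hammingNorm y = u ∧ ∃ c ∈ C, hammingNorm c = r ∧ hammingDist y c ≤ t))
      = W.biUnion (fun c => Finset.univ.filter
          (fun y => hammingNorm y = u ∧ hammingDist y c ≤ t)) := by
    ext y
    simp only [Finset.mem_biUnion, Finset.mem_filter, Finset.mem_univ, true_and, hW]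
    tauto
  rw [hLHS, Finset.card_biUnion]
  · apply Finset.sum_const_nat
    intro c hc
    simp only [hW, Finset.mem_filter] at hc
    exact ball_count n t u r c hc.2.2
  · intro c1 h1 c2 h2 hne
    simp only [hW, Finset.mem_coe, Finset.mem_filter, Finset.mem_univ, true_and] at h1 h2
    simp only [Finset.disjoint_left, Finset.mem_filter, Finset.mem_univ, true_and]
    rintro y ⟨-, hd1⟩ ⟨-, hd2⟩
    have hsub : c1 - c2 ∈ C := sub_mem h1.1 h2.1
    have hne' : c1 - c2 ≠ 0 := sub_ne_zero.2 hne
    have := hdmin _ hsub hne'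
    rw [← neg_add_eq_sub, ← hammingDist_eq_hammingNorm, hammingDist_comm] at this
    have htri := hammingDist_triangle c1 y c2
    rw [hammingDist_comm c1 y] at htri
    omega
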